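/- The bracket on n satisfies the Jacobi identity, so n is a Lie algebra; the decomposition n = n₋₂ ⊕ n₋₁ is a Lie algebra grading with [n₋₁, n₋₁] ⊆ n₋₂ and n₋₂ central, so n is 2-step nilpotent; and the bracket map Λ²n₋₁ → n₋₂ is surjective, i.e. n is generated as a Lie algebra by n₋₁. Thus n is a fundamental graded Lie algebra with graded dimensions (4, 3) in degrees (−1, −2). -/

import Mathlib

noncomputable section

open Module TensorProduct

/-- The symmetric tensors `Sym²U′` inside `U′ ⊗ U′`. -/
def sym2sub (U' : Type*) [AddCommGroup U'] [Module ℝ U'] :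
    Submodule ℝ (TensorProduct ℝ U' U') :=
  LinearMap.ker ((TensorProduct.comm ℝ U' U').toLinearMap - LinearMap.id)

/-- The bracket on `n = n₋₂ ⊕ n₋₁ = Sym²U′ ⊕ (U′ ⊗ Q)` (realized inside
`(U′ ⊗ U′) × (U′ ⊗ Q)`) : `n₋₂` is central, and the bracket of `n₋₁` elements is
given by the bilinear map `b`. -/
def nbr {U' Q : Type*} [AddCommGroup U'] [Module ℝ U'] [AddCommGroup Q] [Module ℝ Q]
    (b : TensorProduct ℝ U' Q →ₗ[ℝ] TensorProduct ℝ U' Q →ₗ[ℝ] TensorProduct ℝ U' U')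
    (p q : TensorProduct ℝ U' U' × TensorProduct ℝ U' Q) :
    TensorProduct ℝ U' U' × TensorProduct ℝ U' Q :=
  (b p.2 q.2, 0)

/-- `n` is a fundamental graded 2-step nilpotent Lie algebra with graded
dimensions (4,3) in degrees (−1,−2). -/
theorem n47_fundamental_graded
    (U' Q : Type*) [AddCommGroup U'] [Module ℝ U'] [AddCommGroup Q] [Module ℝ Q]
    (hU : finrank ℝ U' = 2) (hQ : finrank ℝ Q = 2)
    (α : Q →ₗ[ℝ] Q →ₗ[ℝ] ℝ)
    (halt : ∀ q, α q q = 0)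
    (hnd : ∀ q, (∀ q', α q q' = 0) → q = 0)
    (b : TensorProduct ℝ U' Q →ₗ[ℝ] TensorProduct ℝ U' Q →ₗ[ℝ] TensorProduct ℝ U' U')
    (hb : ∀ (u u' : U') (qq qq' : Q),
      b (u ⊗ₜ[ℝ] qq) (u' ⊗ₜ[ℝ] qq') = α qq qq' • (u ⊗ₜ[ℝ] u' + u' ⊗ₜ[ℝ] u)) :
    -- the bracket is skew-symmetric
    (∀ x y, b x y = - b y x) ∧
    -- grading: [n₋₁, n₋₁] ⊆ n₋₂ = Sym²U′
    (∀ x y, b x y ∈ sym2sub U') ∧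
    -- Jacobi identity: n is a Lie algebra
    (∀ p q r : TensorProduct ℝ U' U' × TensorProduct ℝ U' Q,
      nbr b p (nbr b q r) + nbr b q (nbr b r p) + nbr b r (nbr b p q) = 0) ∧
    -- n₋₂ is central
    (∀ p q : TensorProduct ℝ U' U' × TensorProduct ℝ U' Q,
      q.2 = 0 → nbr b p q = 0 ∧ nbr b q p = 0) ∧
    -- n is 2-step nilpotent
    (∀ p q r : TensorProduct ℝ U' U' × TensorProduct ℝ U' Q,
      nbr b (nbr b p q) r = 0) ∧
    -- n is generated by n₋₁: the bracket map Λ²n₋₁ → n₋₂ is surjective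
    (Submodule.span ℝ {t | ∃ x y, t = b x y} = sym2sub U') ∧
    -- graded dimensions (4,3) in degrees (−1,−2)
    (finrank ℝ (TensorProduct ℝ U' Q) = 4 ∧ finrank ℝ ↥(sym2sub U') = 3) := by
  -- skew-symmetry of α
  have hαskew : ∀ q q' : Q, α q q' = - α q' q := by
    intro q q'
    have h := halt (q + q')
    simp [map_add, halt] at h
    linarith
  -- skew-symmetry of b
  have hskew : ∀ x y, b x y = - b y x := by
    have h : b = -b.flip := by
      apply TensorProduct.ext'
      intro u qq
      apply TensorProduct.ext'
      intro u' qq'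
      simp only [LinearMap.neg_apply, LinearMap.flip_apply, hb]
      rw [hαskew qq qq']
      rw [add_comm (u ⊗ₜ[ℝ] u') (u' ⊗ₜ[ℝ] u), neg_smul]
    intro x y
    conv_lhs => rw [h]
    simp
  -- brackets land in symmetric tensors
  have hmem : ∀ x y, b x y ∈ sym2sub U' := by
    have h : b.compr₂ ((TensorProduct.comm ℝ U' U').toLinearMap - LinearMap.id) = 0 := by
      apply TensorProduct.ext'
      intro u qq
      apply TensorProduct.ext'
      intro u' qq'
      simp [LinearMap.compr₂_apply, hb, TensorProduct.comm_tmul, smul_add, add_comm]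
    intro x y
    have := congrArg (fun f => f x y) h
    simpa [sym2sub, LinearMap.mem_ker, LinearMap.compr₂_apply] using this
  refine ⟨hskew, hmem, ?_, ?_, ?_, ?_, ?_, ?_⟩
  · intro p q r
    simp [nbr, Prod.ext_iff]
  · intro p q hq
    constructor <;> simp [nbr, hq, Prod.ext_iff]
  · intro p q r
    simp [nbr, Prod.ext_iff]
  · -- span of brackets = sym2sub
    -- existence of q₀ q₁ with α q₀ q₁ = 1
    haveI : FiniteDimensional ℝ Q := FiniteDimensional.of_finrank_pos (by omega)
    haveI : Nontrivial Q := Module.nontrivial_of_finrank_pos (R := ℝ) (by omega)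
    obtain ⟨q₀, hq₀⟩ := exists_ne (0 : Q)
    have : ¬ ∀ q', α q₀ q' = 0 := fun h => hq₀ (hnd q₀ h)
    push_neg at this
    obtain ⟨q', hq'⟩ := this
    set q₁ : Q := (α q₀ q')⁻¹ • q' with hq₁def
    have hα1 : α q₀ q₁ = 1 := by
      simp [hq₁def, map_smul]
      field_simp
    apply le_antisymm
    · rw [Submodule.span_le]
      rintro t ⟨x, y, rfl⟩
      exact hmem x y
    · intro z hz
      have hzker : (TensorProduct.comm ℝ U' U') z = z := by
        have := hz
        simp only [sym2sub, LinearMap.mem_ker, LinearMap.sub_apply, LinearMap.id_apply,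
          LinearEquiv.coe_coe, sub_eq_zero] at this
        exact this
      have key : ∀ w : TensorProduct ℝ U' U',
          w + (TensorProduct.comm ℝ U' U') w ∈
            Submodule.span ℝ {t | ∃ x y, t = b x y} := by
        intro w
        induction w using TensorProduct.induction_on with
        | zero => simp
        | tmul u u' =>
          apply Submodule.subset_span
          refine ⟨u ⊗ₜ q₀, u' ⊗ₜ q₁, ?_⟩
          rw [hb, hα1, one_smul, TensorProduct.comm_tmul]
        | add w₁ w₂ h₁ h₂ =>
          rw [map_add]
          have := Submodule.add_mem _ h₁ h₂
          convert this using 1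
          abel
      have : z = (2⁻¹ : ℝ) • (z + (TensorProduct.comm ℝ U' U') z) := by
        rw [hzker]; rw [smul_add]
        rw [← add_smul]
        norm_num
      rw [this]
      exact Submodule.smul_mem _ _ (key z)
  · -- dim of n₋₁
    haveI hfU : FiniteDimensional ℝ U' := FiniteDimensional.of_finrank_pos (by omega)
    haveI hfQ : FiniteDimensional ℝ Q := FiniteDimensional.of_finrank_pos (by omega)
    rw [Module.finrank_tensorProduct, hU, hQ]
  · -- finrank of symmetric tensors is 3
    haveI hfU : FiniteDimensional ℝ U' := FiniteDimensional.of_finrank_pos (by omega)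
    set f := (TensorProduct.comm ℝ U' U').toLinearMap - LinearMap.id with hfdef
    have e : Basis (Fin 2) ℝ U' := Module.finBasisOfFinrankEq ℝ U' hU
    set B := Basis.tensorProduct e e with hBdef
    set v : TensorProduct ℝ U' U' := e 1 ⊗ₜ e 0 - e 0 ⊗ₜ e 1 with hvdef
    have hvne : v ≠ 0 := by
      have : B (1, 0) ≠ B (0, 1) := B.injective.ne (by decide)
      simpa [hvdef, hBdef, Basis.tensorProduct_apply, sub_ne_zero] using this
    have hrange : LinearMap.range f = Submodule.span ℝ {v} := by
      apply le_antisymm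
      · rw [LinearMap.range_eq_map, ← B.span_eq, Submodule.map_span, Submodule.span_le]
        rintro t ⟨s, ⟨⟨i, j⟩, rfl⟩, rfl⟩
        fin_cases i <;> fin_cases j <;>
          simp only [hBdef, Basis.tensorProduct_apply, hfdef, LinearMap.sub_apply,
            LinearMap.id_apply, LinearEquiv.coe_coe, TensorProduct.comm_tmul,
            Fin.mk_zero, Fin.mk_one, Fin.isValue]
        · simp
        · have h01 : e (1:Fin 2) ⊗ₜ[ℝ] e 0 - e 0 ⊗ₜ[ℝ] e 1 = v := rfl
          rw [h01]
          exact Submodule.subset_span rfl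
        · have h10 : e (0:Fin 2) ⊗ₜ[ℝ] e 1 - e 1 ⊗ₜ[ℝ] e 0 = -v := by
            rw [hvdef]; abel
          rw [h10]
          exact Submodule.neg_mem _ (Submodule.subset_span rfl)
        · simp
      · rw [Submodule.span_le, Set.singleton_subset_iff]
        exact ⟨e 0 ⊗ₜ e 1, by simp [hfdef, TensorProduct.comm_tmul, hvdef]⟩
    have hrk : finrank ℝ (LinearMap.range f) = 1 := by
      rw [hrange, finrank_span_singleton hvne]
    have htot : finrank ℝ (TensorProduct ℝ U' U') = 4 := by
      rw [Module.finrank_tensorProduct, hU]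
    have := LinearMap.finrank_range_add_finrank_ker f
    rw [hrk, htot] at this
    have : finrank ℝ (LinearMap.ker f) = 3 := by omega
    exact this
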